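/- Let (L, [−,−]) and (L', [−,−]') be Leibniz algebras over a field F, λ, μ : L → L and λ', μ' : L' → L' linear maps, s ∈ L, s' ∈ L', and define the bi-affine brackets {a,b} = [a,b] + λ(a) + μ(b) + s on L and {x,y}' = [x,y]' + λ'(x) + μ'(y) + s' on L'. Then there exists an affine map φ : L → L' (i.e. φ(x) = ψ(x) + q' with ψ linear and q' ∈ L') satisfying φ({a,b}) = {φ(a), φ(b)}' for all a, b ∈ L if and only if there exist a linear map ψ : L → L' with ψ([a,b]) = [ψ(a), ψ(b)]' for all a,b, and a point q' ∈ L', such that for all a ∈ L: ψ(s) = s' + λ'(q') + μ'(q') + [q',q']' − q'; ψ(μ(a)) = [q', ψ(a)]' + μ'(ψ(a)); and ψ(λ(a)) = [ψ(a), q']' + λ'(ψ(a)). -/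
import Mathlib


/-- Characterization of morphisms between Leibniz affgebras `a(L;lam,mu,s)` and
`a(L';lam',mu',s')`: there exists an affine map `φ(x) = ψ(x) + q'` preserving the
bi-affine brackets if and only if there exist a Leibniz algebra morphism `ψ` and a
point `q'` satisfying the three compatibility conditions. -/
theorem leibniz_affgebra_morphism_characterization
    {F L L' : Type*} [Field F] [AddCommGroup L] [Module F L]
    [AddCommGroup L'] [Module F L']
    (B : L →ₗ[F] L →ₗ[F] L) (B' : L' →ₗ[F] L' →ₗ[F] L')
    (leib : ∀ a b c : L, B (B a b) c = B (B a c) b + B a (B b c))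
    (leib' : ∀ a b c : L', B' (B' a b) c = B' (B' a c) b + B' a (B' b c))
    (lam mu : L →ₗ[F] L) (lam' mu' : L' →ₗ[F] L') (s : L) (s' : L')
    (br : L → L → L) (hbr : ∀ a b, br a b = B a b + lam a + mu b + s)
    (br' : L' → L' → L') (hbr' : ∀ a b, br' a b = B' a b + lam' a + mu' b + s') :
    (∃ (ψ : L →ₗ[F] L') (q' : L'),
        ∀ a b : L, ψ (br a b) + q' = br' (ψ a + q') (ψ b + q')) ↔
    (∃ (ψ : L →ₗ[F] L') (q' : L'),
        (∀ a b : L, ψ (B a b) = B' (ψ a) (ψ b)) ∧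
        ψ s = s' + lam' q' + mu' q' + B' q' q' - q' ∧
        (∀ a : L, ψ (mu a) = B' q' (ψ a) + mu' (ψ a)) ∧
        (∀ a : L, ψ (lam a) = B' (ψ a) q' + lam' (ψ a))) := by
  constructor
  · rintro ⟨ψ, q', h⟩
    refine ⟨ψ, q', ?_, ?_, ?_, ?_⟩ <;>
      [skip; skip; skip; skip]
    all_goals {
      first
      | (intro a b
         have h1 := h a b
         have h2 := h a 0
         have h3 := h 0 b
         have h0 := h 0 0
         simp only [hbr, hbr', map_add, map_zero, LinearMap.add_apply,
           LinearMap.zero_apply, zero_add, add_zero] at h1 h2 h3 h0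
         linear_combination (norm := abel1) h1 - h2 - h3 + h0)
      | (have h0 := h 0 0
         simp only [hbr, hbr', map_add, map_zero, LinearMap.add_apply,
           LinearMap.zero_apply, zero_add, add_zero] at h0
         linear_combination (norm := abel1) h0)
      | (intro a
         have h3 := h 0 a
         have h0 := h 0 0
         simp only [hbr, hbr', map_add, map_zero, LinearMap.add_apply,
           LinearMap.zero_apply, zero_add, add_zero] at h3 h0
         linear_combination (norm := abel1) h3 - h0)
      | (intro a
         have h2 := h a 0
         have h0 := h 0 0
         simp only [hbr, hbr', map_add, map_zero, LinearMap.add_apply,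
           LinearMap.zero_apply, zero_add, add_zero] at h2 h0
         linear_combination (norm := abel1) h2 - h0)
    }
  · rintro ⟨ψ, q', hB, hs, hmu, hlam⟩
    refine ⟨ψ, q', fun a b => ?_⟩
    simp only [hbr, hbr', map_add, LinearMap.add_apply, hB, hs, hmu, hlam]
    abel
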